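/- Let x_1, …, x_n ∈ ℝ^d, let w* ∈ ℝ^d, and let y_i = w*ᵀx_i + ε_i where ε_1, …, ε_n are independent real random variables with mean 0 and variance σ². Let λ ∼ Beta(α, α) with c_α = E[λ(1−λ)], independent of the ε_i, let R_ERM(w) = (1/n) Σ_i (y_i − wᵀx_i)², and let R_Mixup(w) = E_{i,j,λ}[(λy_i + (1−λ)y_j − wᵀ(λx_i + (1−λ)x_j))²] with i, j independent uniform indices. Define Σ_x = (1/n²) Σ_{i=1}^n Σ_{j=1}^n (x_i − x_j)(x_i − x_j)ᵀ. Then for every w ∈ ℝ^d, E_ε[R_Mixup(w)] − E_ε[R_ERM(w)] = −c_α (w − w*)ᵀ Σ_x (w − w*) − 2c_α σ² (n−1)/n. In particular, Mixup contributes a concave quadratic bonus centered at w*, and w* minimizes E_ε[R_Mixup] whenever it minimizes E_ε[R_ERM]. -/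

import Mathlib

open MeasureTheory ProbabilityTheory Finset

/-- Expected (over the label noise `ε`) empirical squared-loss risk of the linear
model `w` when labels are generated as `yᵢ = wstarᵀxᵢ + εᵢ`. -/
noncomputable def noiseErmRisk {Ω : Type*} [MeasurableSpace Ω] (P : Measure Ω)
    (d n : ℕ) (x : Fin n → Fin d → ℝ) (wstar : Fin d → ℝ) (ε : Fin n → Ω → ℝ)
    (w : Fin d → ℝ) : ℝ :=
  ∫ ω, (1 / n : ℝ) * ∑ i,
    ((∑ k, wstar k * x i k + ε i ω) - ∑ k, w k * x i k) ^ 2 ∂P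

/-- Expected (over the label noise `ε`) Mixup risk of the linear model `w`, where
the mixing coefficient `lam` lives on an independent probability space and
`(i, j)` are independent uniform indices. -/
noncomputable def noiseMixupRisk {Ω Ω' : Type*} [MeasurableSpace Ω]
    [MeasurableSpace Ω'] (P : Measure Ω) (P' : Measure Ω')
    (d n : ℕ) (x : Fin n → Fin d → ℝ) (wstar : Fin d → ℝ) (ε : Fin n → Ω → ℝ)
    (lam : Ω' → ℝ) (w : Fin d → ℝ) : ℝ :=
  ∫ ω, (1 / (n : ℝ) ^ 2) * ∑ i, ∑ j, ∫ ω',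
    (lam ω' * (∑ k, wstar k * x i k + ε i ω)
        + (1 - lam ω') * (∑ k, wstar k * x j k + ε j ω)
      - ∑ k, w k * (lam ω' * x i k + (1 - lam ω') * x j k)) ^ 2 ∂P' ∂P

/-- **Mixup under the generative linear model.**
If `yᵢ = wstarᵀxᵢ + εᵢ` with independent mean-zero noise of variance `σ²`, and
`lam` is `[0,1]`-valued with mean `1/2` (as for `Beta(α,α)`) on an independent
probability space, then with `c = E[lam(1-lam)]` and
`Σ_x = (1/n²) Σᵢⱼ (xᵢ-xⱼ)(xᵢ-xⱼ)ᵀ`,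
`E_ε[R_Mixup(w)] - E_ε[R_ERM(w)] = -c (w-w*)ᵀΣ_x(w-w*) - 2cσ²(n-1)/n`;
in particular `w*` minimizes `E_ε[R_Mixup]` whenever it minimizes `E_ε[R_ERM]`. -/
theorem mixup_generative_decomposition
    {Ω Ω' : Type*} [MeasurableSpace Ω] [MeasurableSpace Ω']
    (P : Measure Ω) (P' : Measure Ω')
    [IsProbabilityMeasure P] [IsProbabilityMeasure P']
    (d n : ℕ) (hn : 0 < n)
    (x : Fin n → Fin d → ℝ) (wstar : Fin d → ℝ)
    (σ : ℝ) (ε : Fin n → Ω → ℝ)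
    (hmeas : ∀ i, Measurable (ε i))
    (hL2 : ∀ i, MemLp (ε i) 2 P)
    (hindep : iIndepFun ε P)
    (hmean : ∀ i, ∫ ω, ε i ω ∂P = 0)
    (hvar : ∀ i, ∫ ω, (ε i ω) ^ 2 ∂P = σ ^ 2)
    (lam : Ω' → ℝ) (hlam_meas : Measurable lam)
    (hlam_mem : ∀ ω', lam ω' ∈ Set.Icc (0 : ℝ) 1)
    (hlam_mean : ∫ ω', lam ω' ∂P' = 1 / 2) :
    (∀ w : Fin d → ℝ,
      noiseMixupRisk P P' d n x wstar ε lam w - noiseErmRisk P d n x wstar ε w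
        = -(∫ ω', lam ω' * (1 - lam ω') ∂P')
              * ((1 / (n : ℝ) ^ 2) * ∑ i, ∑ j,
                  (∑ k, (w k - wstar k) * (x i k - x j k)) ^ 2)
          - 2 * (∫ ω', lam ω' * (1 - lam ω') ∂P') * σ ^ 2 * (((n : ℝ) - 1) / n)) ∧
    ((∀ w' : Fin d → ℝ,
        noiseErmRisk P d n x wstar ε wstar ≤ noiseErmRisk P d n x wstar ε w') →
      ∀ w' : Fin d → ℝ,
        noiseMixupRisk P P' d n x wstar ε lam wstar
          ≤ noiseMixupRisk P P' d n x wstar ε lam w') := by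
  have hn' : (n : ℝ) ≠ 0 := Nat.cast_ne_zero.mpr hn.ne'
  have hnpos : (0 : ℝ) < n := Nat.cast_pos.mpr hn
  set c : ℝ := ∫ ω', lam ω' * (1 - lam ω') ∂P' with hcdef
  -- integrability on the lam side
  have bd : ∀ f : Ω' → ℝ, Measurable f → (∀ ω', |f ω'| ≤ 1) → Integrable f P' :=
    fun f hf hb => ⟨hf.aestronglyMeasurable,
      HasFiniteIntegral.of_bounded (C := 1) (Filter.Eventually.of_forall hb)⟩
  have ilam : Integrable lam P' := bd lam hlam_meas (fun ω' => by
    have h := hlam_mem ω'; rw [abs_le]; exact ⟨by linarith [h.1], h.2⟩)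
  have ig : Integrable (fun ω' => lam ω' * (1 - lam ω')) P' :=
    bd _ (hlam_meas.mul (measurable_const.sub hlam_meas)) (fun ω' => by
      have h := hlam_mem ω'
      rw [abs_le]; constructor <;> nlinarith [h.1, h.2])
  have i1m : Integrable (fun ω' => 1 - lam ω') P' := (integrable_const 1).sub ilam
  have h1m_mean : ∫ ω', (1 - lam ω') ∂P' = 1 / 2 := by
    rw [integral_sub (integrable_const 1) ilam, hlam_mean, integral_const]; simp; norm_num
  have hc0 : 0 ≤ c := integral_nonneg fun ω' =>
    mul_nonneg (hlam_mem ω').1 (by linarith [(hlam_mem ω').2])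
  have hc12 : c ≤ 1 / 2 := by
    rw [hcdef, ← hlam_mean]
    exact integral_mono ig ilam fun ω' => by nlinarith [(hlam_mem ω').1, (hlam_mem ω').2]
  -- key inner integral over lam
  have key : ∀ u v : ℝ, ∫ ω', (lam ω' * u + (1 - lam ω') * v) ^ 2 ∂P'
      = (1 / 2 - c) * u ^ 2 + 2 * c * (u * v) + (1 / 2 - c) * v ^ 2 := by
    intro u v
    have heq : (fun ω' => (lam ω' * u + (1 - lam ω') * v) ^ 2)
        = fun ω' => u ^ 2 * lam ω'
            + (v ^ 2 * (1 - lam ω')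
              + (2 * (u * v) - u ^ 2 - v ^ 2) * (lam ω' * (1 - lam ω'))) := by
      funext ω'; ring
    have e1 : Integrable (fun ω' => u ^ 2 * lam ω') P' := ilam.const_mul _
    have e2 : Integrable (fun ω' => v ^ 2 * (1 - lam ω')) P' := i1m.const_mul _
    have e3 : Integrable (fun ω' =>
        (2 * (u * v) - u ^ 2 - v ^ 2) * (lam ω' * (1 - lam ω'))) P' := ig.const_mul _
    have e23 : Integrable (fun ω' => v ^ 2 * (1 - lam ω')
        + (2 * (u * v) - u ^ 2 - v ^ 2) * (lam ω' * (1 - lam ω'))) P' := e2.add e3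
    rw [heq, integral_add e1 e23, integral_add e2 e3,
      integral_const_mul, integral_const_mul, integral_const_mul,
      hlam_mean, h1m_mean, ← hcdef]
    ring
  -- the noise side
  have iε : ∀ i, Integrable (ε i) P := fun i => (hL2 i).integrable one_le_two
  have iεsq : ∀ i, Integrable (fun ω => ε i ω ^ 2) P := fun i => (hL2 i).integrable_sq
  have iεε : ∀ i j, Integrable (fun ω => ε i ω * ε j ω) P := by
    intro i j
    rcases eq_or_ne i j with rfl | hij
    · exact (iεsq i).congr (Filter.Eventually.of_forall fun ω => by ring)
    · exact (hindep.indepFun hij).integrable_mul (iε i) (iε j)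
  have hεεint : ∀ i j, ∫ ω, ε i ω * ε j ω ∂P = if i = j then σ ^ 2 else 0 := by
    intro i j
    rcases eq_or_ne i j with rfl | hij
    · rw [if_pos rfl, ← hvar i]; congr 1; funext ω; ring
    · rw [if_neg hij]
      have h : ∫ ω, ε i ω * ε j ω ∂P = (∫ ω, ε i ω ∂P) * ∫ ω, ε j ω ∂P :=
        (hindep.indepFun hij).integral_fun_mul_eq_mul_integral (iε i).aestronglyMeasurable
          (iε j).aestronglyMeasurable
      rw [h, hmean, hmean]; ring
  have iprod : ∀ (a b' : ℝ) (i j : Fin n),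
      Integrable (fun ω => (a + ε i ω) * (b' + ε j ω)) P := by
    intro a b' i j
    have h : Integrable (fun ω => a * b' + (b' * ε i ω + (a * ε j ω + ε i ω * ε j ω))) P :=
      (integrable_const _).add (((iε i).const_mul _).add
        (((iε j).const_mul _).add (iεε i j)))
    exact h.congr (Filter.Eventually.of_forall fun ω => by ring)
  have hprod : ∀ (a b' : ℝ) (i j : Fin n), ∫ ω, (a + ε i ω) * (b' + ε j ω) ∂P
      = a * b' + if i = j then σ ^ 2 else 0 := by
    intro a b' i j
    have heq : (fun ω => (a + ε i ω) * (b' + ε j ω))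
        = fun ω => a * b' + (b' * ε i ω + (a * ε j ω + ε i ω * ε j ω)) := by
      funext ω; ring
    have f1 : Integrable (fun ω => b' * ε i ω) P := (iε i).const_mul _
    have f2 : Integrable (fun ω => a * ε j ω) P := (iε j).const_mul _
    have f3 : Integrable (fun ω => ε i ω * ε j ω) P := iεε i j
    have f23 : Integrable (fun ω => a * ε j ω + ε i ω * ε j ω) P := f2.add f3
    have f123 : Integrable (fun ω => b' * ε i ω + (a * ε j ω + ε i ω * ε j ω)) P :=
      f1.add f23
    rw [heq, integral_add (integrable_const _) f123, integral_add f1 f23,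
      integral_add f2 f3,
      integral_const, integral_const_mul, integral_const_mul, hmean, hmean, hεεint]
    simp
  have iquad : ∀ (a : ℝ) (i : Fin n), Integrable (fun ω => (a + ε i ω) ^ 2) P := by
    intro a i
    exact (iprod a a i i).congr (Filter.Eventually.of_forall fun ω => by ring)
  have hquad : ∀ (a : ℝ) (i : Fin n), ∫ ω, (a + ε i ω) ^ 2 ∂P = a ^ 2 + σ ^ 2 := by
    intro a i
    have h : ∫ ω, (a + ε i ω) ^ 2 ∂P = ∫ ω, (a + ε i ω) * (a + ε i ω) ∂P := by
      congr 1; funext ω; ring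
    rw [h, hprod, if_pos rfl]; ring
  -- closed form for the ERM-style integral
  have hermg : ∀ b : Fin n → ℝ, (∫ ω, (1 / n : ℝ) * ∑ i, (b i + ε i ω) ^ 2 ∂P)
      = (1 / n) * ∑ i, (b i) ^ 2 + σ ^ 2 := by
    intro b
    rw [integral_const_mul, integral_finset_sum _ (fun i _ => iquad (b i) i)]
    have h : ∑ i, ∫ ω, (b i + ε i ω) ^ 2 ∂P = ∑ i, ((b i) ^ 2 + σ ^ 2) :=
      Finset.sum_congr rfl fun i _ => hquad (b i) i
    rw [h, Finset.sum_add_distrib, Finset.sum_const, Finset.card_univ, Fintype.card_fin,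
      nsmul_eq_mul]
    field_simp
  -- closed form for the Mixup-style integral
  have hmixg : ∀ b : Fin n → ℝ,
      (∫ ω, (1 / (n : ℝ) ^ 2) * ∑ i, ∑ j, ∫ ω',
          (lam ω' * (b i + ε i ω) + (1 - lam ω') * (b j + ε j ω)) ^ 2 ∂P' ∂P)
      = (1 - 2 * c) * ((1 / n) * ∑ i, (b i) ^ 2 + σ ^ 2)
        + 2 * c * ((1 / (n : ℝ) ^ 2) * (∑ i, b i) ^ 2 + σ ^ 2 / n) := by
    intro b
    have hfun : (fun ω => (1 / (n : ℝ) ^ 2) * ∑ i, ∑ j, ∫ ω',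
          (lam ω' * (b i + ε i ω) + (1 - lam ω') * (b j + ε j ω)) ^ 2 ∂P')
        = fun ω => (1 / (n : ℝ) ^ 2) * ∑ i, ∑ j,
            ((1 / 2 - c) * (b i + ε i ω) ^ 2
              + (2 * c * ((b i + ε i ω) * (b j + ε j ω))
                + (1 / 2 - c) * (b j + ε j ω) ^ 2)) := by
      funext ω; congr 1
      refine Finset.sum_congr rfl fun i _ => Finset.sum_congr rfl fun j _ => ?_
      rw [key]; ring
    have itm : ∀ i j : Fin n, Integrable (fun ω =>
        (1 / 2 - c) * (b i + ε i ω) ^ 2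
          + (2 * c * ((b i + ε i ω) * (b j + ε j ω))
            + (1 / 2 - c) * (b j + ε j ω) ^ 2)) P := fun i j =>
      ((iquad _ i).const_mul _).add (((iprod _ _ i j).const_mul _).add
        ((iquad _ j).const_mul _))
    rw [hfun, integral_const_mul,
      integral_finset_sum _ (fun i _ => integrable_finset_sum _ (fun j _ => itm i j))]
    have h2 : ∑ i : Fin n, ∫ ω, (∑ j, ((1 / 2 - c) * (b i + ε i ω) ^ 2
          + (2 * c * ((b i + ε i ω) * (b j + ε j ω))
            + (1 / 2 - c) * (b j + ε j ω) ^ 2))) ∂P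
        = ∑ i : Fin n, ∑ j : Fin n, ((1 / 2 - c) * ((b i) ^ 2 + σ ^ 2)
          + (2 * c * (b i * b j + if i = j then σ ^ 2 else 0)
            + (1 / 2 - c) * ((b j) ^ 2 + σ ^ 2))) := by
      refine Finset.sum_congr rfl fun i _ => ?_
      rw [integral_finset_sum _ (fun j _ => itm i j)]
      refine Finset.sum_congr rfl fun j _ => ?_
      have g1 : Integrable (fun ω => (1 / 2 - c) * (b i + ε i ω) ^ 2) P :=
        (iquad _ i).const_mul _
      have g2 : Integrable (fun ω =>
          2 * c * ((b i + ε i ω) * (b j + ε j ω))) P := (iprod _ _ i j).const_mul _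
      have g3 : Integrable (fun ω => (1 / 2 - c) * (b j + ε j ω) ^ 2) P :=
        (iquad _ j).const_mul _
      have g23 : Integrable (fun ω => 2 * c * ((b i + ε i ω) * (b j + ε j ω))
          + (1 / 2 - c) * (b j + ε j ω) ^ 2) P := g2.add g3
      rw [integral_add g1 g23, integral_add g2 g3,
        integral_const_mul, integral_const_mul, integral_const_mul,
        hquad, hquad, hprod]
    rw [h2]
    have h3 : ∑ i : Fin n, ∑ j : Fin n, ((1 / 2 - c) * ((b i) ^ 2 + σ ^ 2)
          + (2 * c * (b i * b j + if i = j then σ ^ 2 else 0)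
            + (1 / 2 - c) * ((b j) ^ 2 + σ ^ 2)))
        = (n : ℝ) * ((1 / 2 - c) * ((∑ i, (b i) ^ 2) + (n : ℝ) * σ ^ 2))
          + (2 * c * ((∑ i, b i) * (∑ j, b j) + (n : ℝ) * σ ^ 2)
            + (n : ℝ) * ((1 / 2 - c) * ((∑ i, (b i) ^ 2) + (n : ℝ) * σ ^ 2))) := by
      have hsplit : ∀ f g : Fin n → ℝ, ∑ i, (f i + g i) = (∑ i, f i) + ∑ i, g i :=
        fun f g => Finset.sum_add_distrib
      have hconst : ∀ y : ℝ, ∑ _i : Fin n, y = (n : ℝ) * y := by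
        intro y
        rw [Finset.sum_const, Finset.card_univ, Fintype.card_fin, nsmul_eq_mul]
      have hrow : ∀ i : Fin n, ∑ j : Fin n, ((1 / 2 - c) * ((b i) ^ 2 + σ ^ 2)
            + (2 * c * (b i * b j + if i = j then σ ^ 2 else 0)
              + (1 / 2 - c) * ((b j) ^ 2 + σ ^ 2)))
          = (n : ℝ) * ((1 / 2 - c) * ((b i) ^ 2 + σ ^ 2))
            + (2 * c * (b i * (∑ j, b j) + σ ^ 2)
              + (1 / 2 - c) * ((∑ j, (b j) ^ 2) + (n : ℝ) * σ ^ 2)) := by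
        intro i
        have hr1 : ∑ j : Fin n, 2 * c * (b i * b j + if i = j then σ ^ 2 else 0)
            = 2 * c * (b i * (∑ j, b j) + σ ^ 2) := by
          rw [← Finset.mul_sum, hsplit, ← Finset.mul_sum]
          simp [Finset.sum_ite_eq]
        have hr2 : ∑ j : Fin n, (1 / 2 - c) * ((b j) ^ 2 + σ ^ 2)
            = (1 / 2 - c) * ((∑ j, (b j) ^ 2) + (n : ℝ) * σ ^ 2) := by
          rw [← Finset.mul_sum, hsplit, hconst]
        rw [hsplit, hsplit, hconst, hr1, hr2]
      calc ∑ i : Fin n, ∑ j : Fin n, ((1 / 2 - c) * ((b i) ^ 2 + σ ^ 2)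
            + (2 * c * (b i * b j + if i = j then σ ^ 2 else 0)
              + (1 / 2 - c) * ((b j) ^ 2 + σ ^ 2)))
          = ∑ i : Fin n, ((n : ℝ) * ((1 / 2 - c) * ((b i) ^ 2 + σ ^ 2))
            + (2 * c * (b i * (∑ j, b j) + σ ^ 2)
              + (1 / 2 - c) * ((∑ j, (b j) ^ 2) + (n : ℝ) * σ ^ 2))) :=
          Finset.sum_congr rfl fun i _ => hrow i
        _ = (n : ℝ) * ((1 / 2 - c) * ((∑ i, (b i) ^ 2) + (n : ℝ) * σ ^ 2))
          + (2 * c * ((∑ i, b i) * (∑ j, b j) + (n : ℝ) * σ ^ 2)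
            + (n : ℝ) * ((1 / 2 - c) * ((∑ i, (b i) ^ 2) + (n : ℝ) * σ ^ 2))) := by
          have ha : ∑ i : Fin n, (n : ℝ) * ((1 / 2 - c) * ((b i) ^ 2 + σ ^ 2))
              = (n : ℝ) * ((1 / 2 - c) * ((∑ i, (b i) ^ 2) + (n : ℝ) * σ ^ 2)) := by
            rw [← Finset.mul_sum, ← Finset.mul_sum, hsplit, hconst]
          have hb2 : ∑ i : Fin n, 2 * c * (b i * (∑ j, b j) + σ ^ 2)
              = 2 * c * ((∑ i, b i) * (∑ j, b j) + (n : ℝ) * σ ^ 2) := by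
            rw [← Finset.mul_sum, hsplit, ← Finset.sum_mul, hconst]
          have hc3 : ∑ _i : Fin n,
              ((1 / 2 - c) * ((∑ j, (b j) ^ 2) + (n : ℝ) * σ ^ 2))
              = (n : ℝ) * ((1 / 2 - c) * ((∑ i, (b i) ^ 2) + (n : ℝ) * σ ^ 2)) :=
            hconst _
          rw [hsplit, hsplit, ha, hb2, hc3]
    rw [h3]
    field_simp
    ring
  -- connect the definitions to the closed forms
  have herm : ∀ w : Fin d → ℝ, noiseErmRisk P d n x wstar ε w
      = (1 / n) * ∑ i, (∑ k, wstar k * x i k - ∑ k, w k * x i k) ^ 2 + σ ^ 2 := by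
    intro w
    have h : noiseErmRisk P d n x wstar ε w
        = ∫ ω, (1 / n : ℝ) * ∑ i,
            ((∑ k, wstar k * x i k - ∑ k, w k * x i k) + ε i ω) ^ 2 ∂P := by
      unfold noiseErmRisk
      congr 1; funext ω; congr 1
      exact Finset.sum_congr rfl fun i _ => by ring
    rw [h]; exact hermg _
  have hmix : ∀ w : Fin d → ℝ, noiseMixupRisk P P' d n x wstar ε lam w
      = (1 - 2 * c) * ((1 / n) * ∑ i, (∑ k, wstar k * x i k - ∑ k, w k * x i k) ^ 2 + σ ^ 2)
        + 2 * c * ((1 / (n : ℝ) ^ 2)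
            * (∑ i, (∑ k, wstar k * x i k - ∑ k, w k * x i k)) ^ 2 + σ ^ 2 / n) := by
    intro w
    have h : noiseMixupRisk P P' d n x wstar ε lam w
        = ∫ ω, (1 / (n : ℝ) ^ 2) * ∑ i, ∑ j, ∫ ω',
            (lam ω' * ((∑ k, wstar k * x i k - ∑ k, w k * x i k) + ε i ω)
              + (1 - lam ω') * ((∑ k, wstar k * x j k - ∑ k, w k * x j k) + ε j ω)) ^ 2
              ∂P' ∂P := by
      unfold noiseMixupRisk
      congr 1; funext ω; congr 1
      refine Finset.sum_congr rfl fun i _ => Finset.sum_congr rfl fun j _ => ?_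
      congr 1; funext ω'
      have hw : ∑ k, w k * (lam ω' * x i k + (1 - lam ω') * x j k)
          = lam ω' * ∑ k, w k * x i k + (1 - lam ω') * ∑ k, w k * x j k := by
        rw [Finset.mul_sum, Finset.mul_sum, ← Finset.sum_add_distrib]
        exact Finset.sum_congr rfl fun k _ => by ring
      rw [hw]; ring
    rw [h]; exact hmixg _
  -- sum identity for the quadratic form
  have hDD : ∀ b : Fin n → ℝ, ∑ i : Fin n, ∑ j : Fin n, (b j - b i) ^ 2
      = 2 * (n : ℝ) * (∑ i, (b i) ^ 2) - 2 * (∑ i, b i) ^ 2 := by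
    intro b
    have h1 : ∀ i : Fin n, ∑ j : Fin n, (b j - b i) ^ 2
        = (∑ j, (b j) ^ 2) - 2 * (b i * ∑ j, b j) + (n : ℝ) * (b i) ^ 2 := by
      intro i
      have : ∀ j : Fin n, (b j - b i) ^ 2 = (b j) ^ 2 - 2 * (b i * b j) + (b i) ^ 2 :=
        fun j => by ring
      simp only [this]
      rw [Finset.sum_add_distrib, Finset.sum_sub_distrib, Finset.sum_const,
        Finset.card_univ, Fintype.card_fin, nsmul_eq_mul, ← Finset.mul_sum, ← Finset.mul_sum]
    simp only [h1]
    rw [Finset.sum_add_distrib, Finset.sum_sub_distrib, Finset.sum_const, Finset.card_univ,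
      Fintype.card_fin, nsmul_eq_mul, ← Finset.mul_sum, ← Finset.mul_sum, ← Finset.sum_mul]
    ring
  constructor
  · intro w
    rw [hmix w, herm w]
    have hD : ∑ i : Fin n, ∑ j : Fin n, (∑ k, (w k - wstar k) * (x i k - x j k)) ^ 2
        = 2 * (n : ℝ) * (∑ i, (∑ k, wstar k * x i k - ∑ k, w k * x i k) ^ 2)
          - 2 * (∑ i, (∑ k, wstar k * x i k - ∑ k, w k * x i k)) ^ 2 := by
      have h1 : ∀ i j : Fin n, (∑ k, (w k - wstar k) * (x i k - x j k))
          = (∑ k, wstar k * x j k - ∑ k, w k * x j k)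
            - (∑ k, wstar k * x i k - ∑ k, w k * x i k) := by
        intro i j
        have : ∀ k : Fin d, (w k - wstar k) * (x i k - x j k)
            = (w k * x i k - wstar k * x i k) - (w k * x j k - wstar k * x j k) :=
          fun k => by ring
        simp only [this, Finset.sum_sub_distrib]
        ring
      have h2 : ∑ i : Fin n, ∑ j : Fin n, (∑ k, (w k - wstar k) * (x i k - x j k)) ^ 2
          = ∑ i : Fin n, ∑ j : Fin n,
              ((∑ k, wstar k * x j k - ∑ k, w k * x j k)
                - (∑ k, wstar k * x i k - ∑ k, w k * x i k)) ^ 2 :=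
        Finset.sum_congr rfl fun i _ => Finset.sum_congr rfl fun j _ => by rw [h1]
      rw [h2]
      exact hDD _
    rw [hD]
    field_simp
    ring
  · intro _ w'
    rw [hmix wstar, hmix w']
    have hz : ∑ i : Fin n, (∑ k, wstar k * x i k - ∑ k, wstar k * x i k) ^ 2 = 0 := by
      simp
    have hz2 : ∑ i : Fin n, (∑ k, wstar k * x i k - ∑ k, wstar k * x i k) = 0 := by
      simp
    rw [hz, hz2]
    have hS1 : 0 ≤ ∑ i : Fin n, (∑ k, wstar k * x i k - ∑ k, w' k * x i k) ^ 2 :=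
      Finset.sum_nonneg fun i _ => sq_nonneg _
    have hT : 0 ≤ (∑ i : Fin n, (∑ k, wstar k * x i k - ∑ k, w' k * x i k)) ^ 2 :=
      sq_nonneg _
    have hA : 0 ≤ (1 - 2 * c) * ((1 / (n : ℝ))
        * ∑ i : Fin n, (∑ k, wstar k * x i k - ∑ k, w' k * x i k) ^ 2) :=
      mul_nonneg (by linarith) (mul_nonneg (by positivity) hS1)
    have hB : 0 ≤ 2 * c * ((1 / (n : ℝ) ^ 2)
        * (∑ i : Fin n, (∑ k, wstar k * x i k - ∑ k, w' k * x i k)) ^ 2) :=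
      mul_nonneg (by linarith) (mul_nonneg (by positivity) hT)
    have hkey : (1 - 2 * c) * ((1 / (n : ℝ))
          * ∑ i : Fin n, (∑ k, wstar k * x i k - ∑ k, w' k * x i k) ^ 2 + σ ^ 2)
        + 2 * c * ((1 / (n : ℝ) ^ 2)
          * (∑ i : Fin n, (∑ k, wstar k * x i k - ∑ k, w' k * x i k)) ^ 2 + σ ^ 2 / n)
        = ((1 - 2 * c) * ((1 / (n : ℝ)) * 0 + σ ^ 2)
            + 2 * c * ((1 / (n : ℝ) ^ 2) * 0 ^ 2 + σ ^ 2 / n))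
          + ((1 - 2 * c) * ((1 / (n : ℝ))
              * ∑ i : Fin n, (∑ k, wstar k * x i k - ∑ k, w' k * x i k) ^ 2)
            + 2 * c * ((1 / (n : ℝ) ^ 2)
              * (∑ i : Fin n, (∑ k, wstar k * x i k - ∑ k, w' k * x i k)) ^ 2)) := by
      ring
    rw [hkey]
    linarith [hA, hB]
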